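/- For any finite collection of finite sets 𝒫 ⊆ Finset ℕ, there exist disjoint subfamilies 𝒳 and 𝒴 with 𝒳 ∪ 𝒴 = 𝒫 such that |⋃_{A∈𝒳} A| ≤ |𝒳| and there is an injective function f : 𝒴 → ℕ with f(A) ∈ A \ (⋃_{B∈𝒳} B) for all A ∈ 𝒴. -/
import Mathlib

theorem stmt_0 (P : Finset (Finset ℕ)) :
    ∃ X Y : Finset (Finset ℕ), Disjoint X Y ∧ X ∪ Y = P ∧
      (X.biUnion id).card ≤ X.card ∧
      ∃ f : Finset ℕ → ℕ, Set.InjOn f Y ∧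
        ∀ A ∈ Y, f A ∈ A \ X.biUnion id := by
  classical
  set T := P.powerset.filter (fun X => (X.biUnion id).card ≤ X.card) with hT
  have hne : T.Nonempty := ⟨∅, by simp [hT]⟩
  obtain ⟨X, hXT, hmax⟩ := T.exists_max_image Finset.card hne
  rw [hT, Finset.mem_filter, Finset.mem_powerset] at hXT
  obtain ⟨hXP, hXcard⟩ := hXT
  set Y := P \ X with hY
  set U := X.biUnion id with hU
  refine ⟨X, Y, Finset.disjoint_sdiff, by rw [hY, Finset.union_sdiff_of_subset hXP],
    hXcard, ?_⟩
  -- Hall condition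
  have hall : ∀ s : Finset {A // A ∈ Y}, s.card ≤ (s.biUnion (fun A => A.1 \ U)).card := by
    intro s
    by_contra hlt
    push_neg at hlt
    set S := s.image Subtype.val with hS
    have hScard : S.card = s.card := Finset.card_image_of_injective _ Subtype.val_injective
    have hSY : S ⊆ Y := by
      intro A hA
      rw [hS, Finset.mem_image] at hA
      obtain ⟨a, _, rfl⟩ := hA
      exact a.2
    have hbi : s.biUnion (fun A => A.1 \ U) = (S.biUnion id) \ U := by
      ext x
      simp [hS, Finset.mem_biUnion, Finset.mem_sdiff]
      tauto
    have hdisj : Disjoint X S := (Finset.disjoint_sdiff).mono_right hSY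
    have hSne : S.Nonempty := by
      have h0 : 0 < s.card := lt_of_le_of_lt (Nat.zero_le _) hlt
      exact Finset.card_pos.mp (by omega)
    have hmem : X ∪ S ∈ T := by
      rw [hT, Finset.mem_filter, Finset.mem_powerset]
      refine ⟨Finset.union_subset hXP (hSY.trans (Finset.sdiff_subset)), ?_⟩
      have h1 : (X ∪ S).biUnion id = U ∪ S.biUnion id := by
        ext x
        simp only [Finset.mem_biUnion, Finset.mem_union, id_eq, hU]
        aesop
      have h2 : U ∪ S.biUnion id = U ∪ ((S.biUnion id) \ U) := by
        simp
      have h3 : ((X ∪ S).biUnion id).card ≤ U.card + ((S.biUnion id) \ U).card := by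
        rw [h1, h2]
        exact Finset.card_union_le _ _
      have h4 : ((S.biUnion id) \ U).card < S.card := by
        rw [← hbi, hScard]; exact hlt
      have h5 : (X ∪ S).card = X.card + S.card := Finset.card_union_of_disjoint hdisj
      omega
    have hcard : (X ∪ S).card ≤ X.card := hmax _ hmem
    have : X.card + S.card ≤ X.card := by
      rw [← Finset.card_union_of_disjoint hdisj]; exact hcard
    have := Finset.card_pos.mpr hSne
    omega
  obtain ⟨f, hfinj, hfmem⟩ :=
    (Finset.all_card_le_biUnion_card_iff_existsInjective' (fun A : {A // A ∈ Y} => A.1 \ U)).mp hall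
  refine ⟨fun A => if h : A ∈ Y then f ⟨A, h⟩ else 0, ?_, ?_⟩
  · intro A hA B hB hAB
    simp only [Finset.mem_coe] at hA hB
    simp only [dif_pos hA, dif_pos hB] at hAB
    exact congrArg Subtype.val (hfinj hAB)
  · intro A hA
    simp only [dif_pos hA]
    exact hfmem ⟨A, hA⟩
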